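/- Given a feasible solution (q*; w*) of the relaxed system (Σ_{i∈S} w*_i ≥ q* for minimal winning S, ≤ q*-1 for maximal losing S, q* ≥ 1, w*_i ≥ 1), the scaled rounding w' = ⌊n·w*⌋, q' = ⌊n(q*-1)⌋ + 1 is an integer solution: Σ_{i∈S} w'_i ≥ q' for every minimal winning coalition S and Σ_{i∈S} w'_i ≤ q' - 1 for every maximal losing coalition S. -/

import Mathlib

theorem stmt_14 {n : ℕ} (Wmin Lmax : Set (Finset (Fin n)))
    (w : Fin n → ℝ) (q : ℝ)
    (hq : 1 ≤ q) (hw : ∀ i, 1 ≤ w i)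
    (hWin : ∀ S ∈ Wmin, q ≤ ∑ i ∈ S, w i)
    (hLose : ∀ S ∈ Lmax, ∑ i ∈ S, w i ≤ q - 1) :
    (∀ S ∈ Wmin, ⌊(n : ℝ) * (q - 1)⌋ + 1 ≤ ∑ i ∈ S, ⌊(n : ℝ) * w i⌋) ∧
    (∀ S ∈ Lmax, ∑ i ∈ S, ⌊(n : ℝ) * w i⌋ ≤ (⌊(n : ℝ) * (q - 1)⌋ + 1) - 1) := by
  constructor
  · intro S hS
    rcases S.eq_empty_or_nonempty with rfl | hne
    · have := hWin ∅ hS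
      simp at this
      linarith
    have hcard : (S.card : ℝ) ≤ n := by
      exact_mod_cast (le_trans (Finset.card_le_card (Finset.subset_univ S))
        (le_of_eq (by simp)))
    have hstrict : (n : ℝ) * (q - 1) < (↑(∑ i ∈ S, ⌊(n : ℝ) * w i⌋) : ℝ) := by
      push_cast
      have h1 : ∀ i ∈ S, (n : ℝ) * w i - 1 < (⌊(n : ℝ) * w i⌋ : ℝ) := by
        intro i _
        have := Int.sub_one_lt_floor ((n : ℝ) * w i)
        linarith
      have h2 : ∑ i ∈ S, ((n : ℝ) * w i - 1) < ∑ i ∈ S, ((⌊(n : ℝ) * w i⌋ : ℝ)) :=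
        Finset.sum_lt_sum_of_nonempty hne h1
      have h3 : ∑ i ∈ S, ((n : ℝ) * w i - 1) = (n : ℝ) * (∑ i ∈ S, w i) - S.card := by
        rw [Finset.sum_sub_distrib, Finset.mul_sum]
        simp
      have h4 : (n : ℝ) * q ≤ (n : ℝ) * (∑ i ∈ S, w i) :=
        mul_le_mul_of_nonneg_left (hWin S hS) (Nat.cast_nonneg n)
      nlinarith
    have := Int.floor_lt.mpr hstrict
    omega
  · intro S hS
    have h1 : (↑(∑ i ∈ S, ⌊(n : ℝ) * w i⌋) : ℝ) ≤ (n : ℝ) * (q - 1) := by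
      push_cast
      calc ∑ i ∈ S, ((⌊(n : ℝ) * w i⌋ : ℝ)) ≤ ∑ i ∈ S, (n : ℝ) * w i :=
            Finset.sum_le_sum (fun i _ => Int.floor_le _)
        _ = (n : ℝ) * ∑ i ∈ S, w i := (Finset.mul_sum _ _ _).symm
        _ ≤ (n : ℝ) * (q - 1) :=
            mul_le_mul_of_nonneg_left (hLose S hS) (Nat.cast_nonneg n)
    have := Int.le_floor.mpr h1
    omega
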